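/- Let H : ℝ → ℝ be defined by H(u) = 1 for u > 0 and H(u) = 0 for u ≤ 0. Then the set of continuous functions u : [0,∞) → ℝ satisfying u(t) = ∫₀^t H(u(s)) ds for all t ≥ 0 is exactly the family {v_c : c ∈ [0,∞]}, where v_c(t) = max(t − c, 0) for c ∈ [0,∞) and v_∞(t) = 0 for all t ≥ 0. -/

import Mathlib

open MeasureTheory Set
open scoped NNReal

noncomputable section

/-- The space `Ω = C([0,∞) → ℝ)` of continuous paths. -/
abbrev IPath (X : Type*) [TopologicalSpace X] : Type _ := C(ℝ≥0, X)

/-- The discontinuous right-hand side `H(u) = 1` for `u > 0`, `H(u) = 0` for `u ≤ 0`. -/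
def Hside (u : ℝ) : ℝ := if 0 < u then 1 else 0

lemma Hside_nonneg (x : ℝ) : 0 ≤ Hside x := by
  unfold Hside; split <;> norm_num

/-- Integral of the step function `1_{s > c}` over `(0, t]`. -/
lemma integral_step (c t : ℝ≥0) :
    ∫ s in Ioc (0 : ℝ) (t : ℝ), (if (c : ℝ) < s then (1 : ℝ) else 0) =
      max ((t : ℝ) - (c : ℝ)) 0 := by
  have h1 : ∀ s : ℝ, (if (c : ℝ) < s then (1 : ℝ) else 0) =
      (Ioi (c : ℝ)).indicator (fun _ => (1 : ℝ)) s := by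
    intro s
    simp [Set.indicator, mem_Ioi]
  simp_rw [h1]
  rw [setIntegral_indicator measurableSet_Ioi]
  rw [integral_const]
  have h2 : Ioc (0 : ℝ) (t : ℝ) ∩ Ioi (c : ℝ) = Ioc (c : ℝ) (t : ℝ) := by
    rw [Ioc_inter_Ioi]
    simp
  rw [h2, measureReal_restrict_apply_univ, measureReal_def, Real.volume_Ioc, smul_eq_mul, mul_one,
    ENNReal.toReal_ofReal']

/-- The composed right-hand side is integrable on bounded intervals. -/
lemma integrableOn_Hside (u : IPath ℝ) (T : ℝ) :
    IntegrableOn (fun s => Hside (u (Real.toNNReal s))) (Ioc (0 : ℝ) T) := by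
  have hcont : Continuous fun s : ℝ => u (Real.toNNReal s) :=
    u.continuous.comp continuous_real_toNNReal
  have hS : MeasurableSet {s : ℝ | 0 < u (Real.toNNReal s)} :=
    (isOpen_lt continuous_const hcont).measurableSet
  have heq : (fun s => Hside (u (Real.toNNReal s))) =
      Set.indicator {s : ℝ | 0 < u (Real.toNNReal s)} (fun _ => (1 : ℝ)) := by
    funext s
    simp [Hside, Set.indicator]
  rw [heq]
  exact (integrableOn_const measure_Ioc_lt_top.ne).indicator hS

/-- **The integral funnel of `du/dt = H(u)`, `u(0) = 0`.**  The set of continuous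
`u : [0,∞) → ℝ` with `u(t) = ∫₀^t H(u(s)) ds` for all `t ≥ 0` is exactly the family
`{v_c : c ∈ [0,∞]}`, where `v_c(t) = max(t − c, 0)` for `c ∈ [0,∞)` and
`v_∞(t) = 0` for all `t`. -/
theorem heaviside_funnel :
    {u : IPath ℝ | ∀ t : ℝ≥0,
        u t = ∫ s in Ioc (0 : ℝ) (t : ℝ), Hside (u (Real.toNNReal s))} =
    {u : IPath ℝ | (∀ t : ℝ≥0, u t = 0) ∨
        ∃ c : ℝ≥0, ∀ t : ℝ≥0, u t = max ((t : ℝ) - (c : ℝ)) 0} := by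
  ext u
  simp only [mem_setOf_eq]
  constructor
  · intro hu
    -- monotonicity
    have hmono : ∀ t₁ t₂ : ℝ≥0, t₁ ≤ t₂ → u t₁ ≤ u t₂ := by
      intro t₁ t₂ h
      rw [hu t₁, hu t₂]
      refine setIntegral_mono_set (integrableOn_Hside u t₂) ?_ ?_
      · exact Filter.Eventually.of_forall fun s => Hside_nonneg _
      · exact (Ioc_subset_Ioc_right (by exact_mod_cast h)).eventuallyLE
    set S : Set ℝ≥0 := {t | 0 < u t} with hS
    by_cases hne : S.Nonempty
    · right
      set c : ℝ≥0 := sInf S with hc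
      refine ⟨c, fun t => ?_⟩
      -- characterization of positivity
      have hpos : ∀ s : ℝ≥0, c < s → 0 < u s := by
        intro s hs
        obtain ⟨a, ha, has⟩ := exists_lt_of_csInf_lt hne hs
        exact lt_of_lt_of_le ha (hmono a s has.le)
      have hle : ∀ s : ℝ≥0, 0 < u s → c ≤ s := fun s hs =>
        csInf_le (OrderBot.bddBelow S) hs
      rw [hu t, ← integral_step c t]
      refine setIntegral_congr_ae measurableSet_Ioc ?_
      have hne' : ∀ᵐ s : ℝ ∂volume, s ≠ (c : ℝ) := by
        have : volume ({(c : ℝ)} : Set ℝ) = 0 := Real.volume_singleton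
        rw [MeasureTheory.ae_iff]
        convert this using 2
        ext s; simp
      filter_upwards [hne'] with s hsne hsmem
      have hs0 : (0 : ℝ) < s := hsmem.1
      have hcoe : ((Real.toNNReal s : ℝ≥0) : ℝ) = s := Real.coe_toNNReal s hs0.le
      unfold Hside
      by_cases hsc : (c : ℝ) < s
      · have : c < Real.toNNReal s := Real.lt_toNNReal_iff_coe_lt.mpr hsc
        rw [if_pos (hpos _ this), if_pos hsc]
      · have hslt : s < (c : ℝ) := lt_of_le_of_ne (not_lt.mp hsc) hsne
        have : ¬ (0 < u (Real.toNNReal s)) := by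
          intro h
          have := hle _ h
          rw [← hcoe] at hslt
          exact absurd (by exact_mod_cast hslt) (not_lt.mpr this)
        rw [if_neg this, if_neg hsc]
    · left
      intro t
      rw [hu t]
      have : ∀ s ∈ Ioc (0 : ℝ) (t : ℝ), Hside (u (Real.toNNReal s)) = 0 := by
        intro s _
        have : ¬ (0 < u (Real.toNNReal s)) := fun h => hne ⟨_, h⟩
        simp [Hside, this]
      rw [setIntegral_congr_fun measurableSet_Ioc this]
      simp
  · rintro (h0 | ⟨c, hc⟩) <;> intro t
    · rw [h0 t]
      have : ∀ s ∈ Ioc (0 : ℝ) (t : ℝ), Hside (u (Real.toNNReal s)) = 0 := by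
        intro s _
        rw [h0]
        simp [Hside]
      rw [setIntegral_congr_fun measurableSet_Ioc this]
      simp
    · rw [hc t, ← integral_step c t]
      refine (setIntegral_congr_fun measurableSet_Ioc ?_).symm
      intro s hsmem
      have hcoe : ((Real.toNNReal s : ℝ≥0) : ℝ) = s := Real.coe_toNNReal s hsmem.1.le
      show Hside (u (Real.toNNReal s)) = _
      rw [hc, hcoe]
      unfold Hside
      simp only [lt_sup_iff, sub_pos, lt_self_iff_false, or_false]
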